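/- Let G be a bipartite graph with a matching M, let C be an M-cycle of length 2n, and let P = P[x,y] be an M-path in G − V(C). If the number of edges of G between {x, y} and V(C) exceeds n, then the subgraph of G induced on V(P) ∪ V(C) contains an M-cycle of length |P| + 2i for every i with 1 ≤ i ≤ n. -/

import Mathlib

open SimpleGraph Walk

section Aux
variable {V : Type*}

private lemma listAltCount {α : Type*} (p : α → Bool) :
    ∀ (l : List α) (c : Bool),
    (∀ i (h : i < l.length), p l[i] = (decide (i % 2 = 0) == c)) →
    (l.filter p).length = (if c then (l.length + 1) / 2 else l.length / 2) := by
  intro l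
  induction l with
  | nil => intro c _; simp
  | cons a l ih =>
    intro c h
    have h0 : p a = c := by have := h 0 (by simp); simpa using this
    have hrec := ih (!c) (by
      intro i hi
      have := h (i + 1) (by simpa using Nat.succ_lt_succ hi)
      simp only [List.getElem_cons_succ] at this
      rw [this]
      rcases Nat.even_or_odd i with he | ho
      · have h1 : i % 2 = 0 := Nat.even_iff.mp he
        have h2 : (i+1) % 2 = 1 := by omega
        cases c <;> simp [h1, h2]
      · have h1 : i % 2 = 1 := Nat.odd_iff.mp ho
        have h2 : (i+1) % 2 = 0 := by omega
        cases c <;> simp [h1, h2])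
    cases c with
    | true =>
      simp only [h0, List.filter_cons, if_pos rfl]
      simp only [Bool.not_true, if_neg (by simp : ¬ (false = true))] at hrec
      simp only [List.length_cons, if_pos rfl]
      simp [hrec]
      omega
    | false =>
      have : ¬ (p a = true) := by simp [h0]
      simp only [List.filter_cons, if_neg this]
      simp only [Bool.not_false, if_pos rfl] at hrec
      simp only [List.length_cons, if_neg (by simp : ¬ (false = true))]
      simp [hrec]

private lemma walk_support_eq {G : SimpleGraph V} {a b : V} (p : G.Walk a b) :
    p.support = (List.range (p.length + 1)).map p.getVert := by
  induction p with
  | nil => simp [List.range_succ]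
  | cons h q ih =>
    rw [support_cons, ih, length_cons]
    conv_rhs => rw [List.range_succ_eq_map, List.map_cons, List.map_map]
    congr 1

private lemma walk_edges_eq {G : SimpleGraph V} {a b : V} (p : G.Walk a b) :
    p.edges = (List.range p.length).map (fun t => s(p.getVert t, p.getVert (t + 1))) := by
  induction p with
  | nil => simp
  | cons h q ih =>
    rw [edges_cons, ih, length_cons]
    conv_rhs => rw [List.range_succ_eq_map, List.map_cons, List.map_map]
    congr 1
    · simp [getVert_cons_succ]

end Aux

section Aux2
variable {V : Type*}

private lemma walk_side {G : SimpleGraph V} {X : Finset V}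
    (hbip : ∀ u v : V, G.Adj u v → (u ∈ X ↔ v ∉ X)) :
    ∀ {a b : V} (p : G.Walk a b) (t : ℕ), t ≤ p.length →
      (p.getVert t ∈ X ↔ (a ∈ X ↔ t % 2 = 0)) := by
  intro a b p
  induction p with
  | nil =>
    intro t ht
    simp only [length_nil, Nat.le_zero] at ht
    subst ht
    simp [getVert_zero]
  | cons h q ih =>
    intro t ht
    match t with
    | 0 => simp [getVert_zero]
    | (t+1) =>
      rw [getVert_cons_succ]
      have h2 := ih t (by simpa [length_cons] using ht)
      have h3 := hbip _ _ h
      rcases Nat.even_or_odd t with he | ho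
      · have e1 : t % 2 = 0 := Nat.even_iff.mp he
        have e2 : ¬ ((t+1) % 2 = 0) := by omega
        rw [h2]; simp [e1, e2]; tauto
      · have e1 : ¬ (t % 2 = 0) := by have := Nat.odd_iff.mp ho; omega
        have e2 : (t+1) % 2 = 0 := by have := Nat.odd_iff.mp ho; omega
        rw [h2]; simp [e1, e2]; tauto

private def chain {G : SimpleGraph V} (v : ℕ → V) (hv : ∀ j, G.Adj (v j) (v (j+1))) :
    (ℓ : ℕ) → (j : ℕ) → G.Walk (v j) (v (j + ℓ))
  | 0, j => Walk.nil
  | (ℓ+1), j => Walk.cons (hv j) ((chain v hv ℓ (j+1)).copy rfl (congrArg v (by omega)))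

private lemma chain_length {G : SimpleGraph V} (v : ℕ → V) (hv : ∀ j, G.Adj (v j) (v (j+1))) :
    ∀ (ℓ j : ℕ), (chain v hv ℓ j).length = ℓ := by
  intro ℓ
  induction ℓ with
  | zero => intro j; rfl
  | succ ℓ ih => intro j; simp [chain, ih]

private lemma chain_support {G : SimpleGraph V} (v : ℕ → V) (hv : ∀ j, G.Adj (v j) (v (j+1))) :
    ∀ (ℓ j : ℕ), (chain v hv ℓ j).support = (List.range (ℓ+1)).map (fun t => v (j + t)) := by
  intro ℓ
  induction ℓ with
  | zero => intro j; simp [chain, List.range_succ]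
  | succ ℓ ih =>
    intro j
    rw [show chain v hv (ℓ+1) j = Walk.cons (hv j) ((chain v hv ℓ (j+1)).copy rfl (congrArg v (by omega))) from rfl]
    rw [support_cons, support_copy, ih]
    conv_rhs => rw [List.range_succ_eq_map, List.map_cons, List.map_map]
    congr 1
    apply List.map_congr_left
    intro t _
    simp only [Function.comp]
    congr 1
    omega

private lemma chain_edges {G : SimpleGraph V} (v : ℕ → V) (hv : ∀ j, G.Adj (v j) (v (j+1))) :
    ∀ (ℓ j : ℕ), (chain v hv ℓ j).edges = (List.range ℓ).map (fun t => s(v (j + t), v (j + t + 1))) := by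
  intro ℓ
  induction ℓ with
  | zero => intro j; simp [chain]
  | succ ℓ ih =>
    intro j
    rw [show chain v hv (ℓ+1) j = Walk.cons (hv j) ((chain v hv ℓ (j+1)).copy rfl (congrArg v (by omega))) from rfl]
    rw [edges_cons, edges_copy, ih]
    conv_rhs => rw [List.range_succ_eq_map, List.map_cons, List.map_map]
    congr 1
    apply List.map_congr_left
    intro t _
    simp only [Function.comp]
    rw [show j + 1 + t = j + (t + 1) from by omega]

end Aux2

section Aux3
variable {V : Type*} [DecidableEq V]

private lemma getVert_mem_support' {G : SimpleGraph V} {a b : V} (p : G.Walk a b) (t : ℕ)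
    (ht : t ≤ p.length) : p.getVert t ∈ p.support := by
  rw [walk_support_eq]
  exact List.mem_map_of_mem (List.mem_range.mpr (by omega))

private lemma walk_edge_get {G : SimpleGraph V} {a c : V} (p : G.Walk a c) (t : ℕ)
    (h : t < p.edges.length) :
    p.edges[t] = s(p.getVert t, p.getVert (t+1)) := by
  have h2 : t < p.length := by rwa [length_edges] at h
  rw [List.getElem_of_eq (walk_edges_eq p) h]
  simp

private lemma listAltCountTrue {α : Type*} (p : α → Bool) (l : List α)
    (h : ∀ i (hh : i < l.length), p l[i] = decide (i % 2 = 0)) :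
    (l.filter p).length = (l.length + 1) / 2 := by
  have := listAltCount p l true (by intro i hi; rw [h i hi]; simp)
  simpa using this

private lemma buildCycle (G : SimpleGraph V) (M : Finset (Sym2 V))
    (hMmatch : ∀ v : V, ∀ e ∈ M, ∀ f ∈ M, v ∈ e → v ∈ f → e = f)
    (x y : V) (P : G.Walk x y) (hP : P.IsPath)
    (hPalt : ∀ i (h : i < P.edges.length), P.edges.get ⟨i, h⟩ ∈ M ↔ Even i)
    (hPodd : Odd P.edges.length)
    (w : V) (C : G.Walk w w)
    (hdisj : ∀ v ∈ P.support, v ∉ C.support)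
    (v : ℕ → V) (hvadj : ∀ j, G.Adj (v j) (v (j+1)))
    (hvsup : ∀ j, v j ∈ C.support)
    (b ℓ i : ℕ) (hl : ℓ = 2*i - 1) (hi : 1 ≤ i)
    (hnodup : ((List.range (ℓ+1)).map (fun t => v (b+t))).Nodup)
    (hMedge : ∀ t, t < ℓ → (s(v (b+t), v (b+t+1)) ∈ M ↔ t % 2 = 0))
    (hadjx : G.Adj x (v (b+ℓ)))
    (hadjy : G.Adj y (v b)) :
    ∃ (u : V) (D : G.Walk u u), D.IsCycle ∧
        (∀ z ∈ D.support, z ∈ P.support ∨ z ∈ C.support) ∧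
        D.length = (P.length + 1) + 2 * i ∧
        2 * (D.edges.toFinset ∩ M).card = D.length := by
  classical
  have hPlen : P.edges.length = P.length := length_edges P
  have hPodd' : P.length % 2 = 1 := by
    obtain ⟨t, ht⟩ := hPodd; omega
  have hxy : x ≠ y := by
    intro h; subst h
    have hnil := isPath_iff_eq_nil.mp hP
    rw [hnil] at hPodd
    simp [Nat.odd_iff] at hPodd
  have hnotinP : ∀ j : ℕ, v j ∉ P.support := by
    intro j hj
    exact hdisj _ hj (hvsup j)
  have hxC : x ∉ C.support := hdisj x P.start_mem_support
  have hyC : y ∉ C.support := hdisj y P.end_mem_support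
  set arc := chain v hvadj ℓ b with harc
  have harcsup : arc.support = (List.range (ℓ+1)).map (fun t => v (b+t)) :=
    chain_support v hvadj ℓ b
  have harcsub : ∀ z ∈ arc.support, z ∈ C.support := by
    intro z hz
    rw [harcsup] at hz
    obtain ⟨t, _, rfl⟩ := List.mem_map.mp hz
    exact hvsup _
  set R := P.append (Walk.cons hadjy arc) with hR
  have hRsupp : R.support = P.support ++ arc.support := by
    rw [hR, support_append, support_cons, List.tail_cons]
  have hRpath : R.IsPath := by
    rw [isPath_def, hRsupp]
    refine hP.support_nodup.append (harcsup ▸ hnodup) ?_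
    intro z hz hz'
    exact hdisj z hz (harcsub z hz')
  have hRedges : R.edges = P.edges ++ (s(y, v b) :: arc.edges) := by
    rw [hR, edges_append, edges_cons]
  have hnotedge : s(v (b+ℓ), x) ∉ R.edges := by
    rw [hRedges]
    intro hmem
    rcases List.mem_append.mp hmem with h | h
    · exact hnotinP _ (P.fst_mem_support_of_mem_edges h)
    rcases List.mem_cons.mp h with h | h
    · rw [Sym2.eq_iff] at h
      rcases h with ⟨h1, h2⟩ | ⟨h1, h2⟩
      · exact hdisj y P.end_mem_support (h1 ▸ hvsup (b+ℓ))
      · exact hxy h2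
    · have hx' := Walk.snd_mem_support_of_mem_edges arc h
      exact hxC (harcsub _ hx')
  set D := Walk.cons hadjx.symm R with hD
  have hDcyc : D.IsCycle := (cons_isCycle_iff R hadjx.symm).mpr ⟨hRpath, hnotedge⟩
  refine ⟨v (b+ℓ), D, hDcyc, ?_, ?_, ?_⟩
  · intro z hz
    rw [hD, support_cons] at hz
    rcases List.mem_cons.mp hz with h | h
    · right; rw [h]; exact hvsup _
    · rw [hRsupp] at h
      rcases List.mem_append.mp h with h | h
      · exact Or.inl h
      · exact Or.inr (harcsub _ h)
  · rw [hD, length_cons, hR, length_append, length_cons, harc, chain_length]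
    omega
  · -- the matching-edge count
    have hDnodup : D.edges.Nodup := hDcyc.edges_nodup
    have hPlen1 : 1 ≤ P.length := by omega
    -- first edge of P
    have h0len : 0 < P.edges.length := by omega
    have e0 : P.edges[0]'h0len = s(P.getVert 0, P.getVert 1) := by
      rw [walk_edge_get P 0 h0len]
    have he0M : P.edges[0]'h0len ∈ M := by
      have := (hPalt 0 h0len).mpr Even.zero
      simpa using this
    -- last edge of P
    have hLlt : P.length - 1 < P.edges.length := by omega
    have eL : P.edges[P.length - 1]'hLlt = s(P.getVert (P.length - 1), y) := by
      rw [walk_edge_get P _ hLlt, show P.length - 1 + 1 = P.length from by omega, getVert_length]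
    have heLM : P.edges[P.length - 1]'hLlt ∈ M := by
      have := (hPalt (P.length - 1) hLlt).mpr (by rw [Nat.even_iff]; omega)
      simpa using this
    have hfstM : s(v (b+ℓ), x) ∉ M := by
      intro hmem
      have heq := hMmatch x _ hmem _ he0M (Sym2.mem_mk_right _ _)
        (by rw [e0, getVert_zero]; exact Sym2.mem_mk_left _ _)
      rw [e0, getVert_zero, Sym2.eq_iff] at heq
      rcases heq with ⟨h1, h2⟩ | ⟨h1, h2⟩
      · exact hxC (h1 ▸ hvsup (b+ℓ))
      · exact hnotinP (b+ℓ) (by rw [h1]; exact getVert_mem_support' P 1 hPlen1)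
    have hmidM : s(y, v b) ∉ M := by
      intro hmem
      have heq := hMmatch y _ hmem _ heLM (Sym2.mem_mk_left _ _)
        (by rw [eL]; exact Sym2.mem_mk_right _ _)
      rw [eL, Sym2.eq_iff] at heq
      rcases heq with ⟨h1, h2⟩ | ⟨h1, h2⟩
      · exact hnotinP b (by rw [h2]; exact P.end_mem_support)
      · exact hnotinP b (by rw [h2]; exact getVert_mem_support' P (P.length - 1) (by omega))
    -- count of M-edges on P
    have hPcount : (P.edges.filter (fun e => decide (e ∈ M))).length = (P.length + 1)/2 := by
      have := listAltCountTrue (fun e => decide (e ∈ M)) P.edges (by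
        intro idx hidx
        have h1 : P.edges[idx] ∈ M ↔ Even idx := by simpa using hPalt idx hidx
        exact decide_eq_decide.mpr (h1.trans (by rw [Nat.even_iff])))
      rw [this, hPlen]
    -- count of M-edges on the arc
    have harccount : (arc.edges.filter (fun e => decide (e ∈ M))).length = i := by
      rw [harc, chain_edges, List.filter_map, List.length_map]
      have hcg : ∀ t ∈ List.range ℓ,
          ((fun e => decide (e ∈ M)) ∘ (fun t => s(v (b+t), v (b+t+1)))) t
            = decide (t % 2 = 0) := by
        intro t ht
        rw [List.mem_range] at ht
        simp only [Function.comp]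
        exact decide_eq_decide.mpr (hMedge t ht)
      rw [List.filter_congr hcg]
      have := listAltCountTrue (fun t => decide (t % 2 = 0)) (List.range ℓ) (by
        intro idx h
        simp [List.getElem_range])
      rw [this, List.length_range]
      omega
    have hDedges : D.edges = s(v (b+ℓ), x) :: (P.edges ++ (s(y, v b) :: arc.edges)) := by
      rw [hD, edges_cons, hRedges]
    have hinter : D.edges.toFinset ∩ M = (D.edges.filter (fun e => decide (e ∈ M))).toFinset := by
      ext e
      simp only [Finset.mem_inter, List.mem_toFinset, List.mem_filter, decide_eq_true_eq]
    have hcard : (D.edges.toFinset ∩ M).card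
        = (D.edges.filter (fun e => decide (e ∈ M))).length := by
      rw [hinter]
      exact List.toFinset_card_of_nodup (hDnodup.filter _)
    have hflen : (D.edges.filter (fun e => decide (e ∈ M))).length
        = (P.length + 1)/2 + i := by
      rw [hDedges, List.filter_cons, List.filter_append, List.filter_cons]
      rw [if_neg (by simpa using hfstM), if_neg (by simpa using hmidM)]
      rw [List.length_append]
      rw [hPcount, harccount]
    have hDlen : D.length = (P.length + 1) + 2 * i := by
      rw [hD, length_cons, hR, length_append, length_cons, harc, chain_length]
      omega
    rw [hcard, hflen, hDlen]
    omega

end Aux3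

section Aux4
variable {V : Type*} [DecidableEq V]

private lemma aux (G : SimpleGraph V) (M : Finset (Sym2 V))
    (hMmatch : ∀ v : V, ∀ e ∈ M, ∀ f ∈ M, v ∈ e → v ∈ f → e = f)
    (n : ℕ) (w : V) (C : G.Walk w w) (hC : C.IsCycle) (hClen : C.length = 2 * n)
    (pe : ℕ) (hpe : pe < 2)
    (halt : ∀ k : ℕ, (s(C.getVert (k % (2*n)), C.getVert ((k+1) % (2*n))) ∈ M ↔ k % 2 = pe))
    (x y : V) (P : G.Walk x y) (hP : P.IsPath)
    (hPalt : ∀ i (h : i < P.edges.length), P.edges.get ⟨i, h⟩ ∈ M ↔ Even i)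
    (hPodd : Odd P.edges.length)
    (hdisj : ∀ v ∈ P.support, v ∉ C.support)
    (hx : ∀ j : ℕ, G.Adj x (C.getVert (j % (2*n))) → ¬ (j % 2 = pe))
    (hy : ∀ j : ℕ, G.Adj y (C.getVert (j % (2*n))) → j % 2 = pe)
    (hcnt : n < {v : V | v ∈ C.support ∧ G.Adj x v}.ncard
      + {v : V | v ∈ C.support ∧ G.Adj y v}.ncard)
    (i : ℕ) (hi1 : 1 ≤ i) (hin : i ≤ n) :
    ∃ (u : V) (D : G.Walk u u), D.IsCycle ∧
        (∀ z ∈ D.support, z ∈ P.support ∨ z ∈ C.support) ∧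
        D.length = (P.length + 1) + 2 * i ∧
        2 * (D.edges.toFinset ∩ M).card = D.length := by
  classical
  have hlen3 := hC.three_le_length
  have hn2 : 2 ≤ n := by omega
  let v : ℕ → V := fun j => C.getVert (j % (2*n))
  have hv : ∀ j, v j = C.getVert (j % (2*n)) := fun _ => rfl
  have hvadj : ∀ j, G.Adj (v j) (v (j+1)) := by
    intro j
    have hj : j % (2*n) < 2*n := Nat.mod_lt _ (by omega)
    have hmm : (j % (2*n) + 1) % (2*n) = (j+1) % (2*n) := Nat.mod_add_mod j (2*n) 1
    by_cases hcase : j % (2*n) + 1 < 2*n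
    · have h1 : (j+1) % (2*n) = j % (2*n) + 1 := by
        rw [← hmm, Nat.mod_eq_of_lt hcase]
      rw [hv, hv, h1]
      exact C.adj_getVert_succ (by omega)
    · have hje : j % (2*n) = 2*n - 1 := by omega
      have h2 : (j+1) % (2*n) = 0 := by
        rw [← hmm, hje, show 2*n - 1 + 1 = 2*n from by omega, Nat.mod_self]
      rw [hv, hv, hje, h2, getVert_zero]
      have hgN : C.getVert (2*n) = w := by rw [← hClen]; exact getVert_length C
      have h3 := C.adj_getVert_succ (i := 2*n - 1) (by omega)
      rw [show 2*n - 1 + 1 = 2*n from by omega, hgN] at h3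
      exact h3
  have hvsup : ∀ j, v j ∈ C.support := by
    intro j
    rw [hv]
    have := Nat.mod_lt j (show 0 < 2*n by omega)
    exact getVert_mem_support' C _ (by rw [hClen]; omega)
  -- injectivity of getVert on the cycle
  have hsupp : C.support = (List.range (2*n+1)).map C.getVert := by
    rw [walk_support_eq, hClen]
  have htail : C.support.tail = (List.range (2*n)).map (fun t => C.getVert (t+1)) := by
    rw [hsupp, List.range_succ_eq_map, List.map_cons, List.map_map, List.tail_cons]
    rfl
  have hgetinj : ∀ p q : ℕ, p ≤ 2*n → q ≤ 2*n → 0 < p → 0 < q →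
      C.getVert p = C.getVert q → p = q := by
    intro p q hp hq hp0 hq0 he
    have hnd := hC.support_nodup
    rw [htail] at hnd
    have hlm : ((List.range (2*n)).map (fun t => C.getVert (t+1))).length = 2*n := by simp
    have e1 : ((List.range (2*n)).map (fun t => C.getVert (t+1)))[p-1]'(by omega) = C.getVert p := by
      simp only [List.getElem_map, List.getElem_range]
      congr 1
      omega
    have e2 : ((List.range (2*n)).map (fun t => C.getVert (t+1)))[q-1]'(by omega) = C.getVert q := by
      simp only [List.getElem_map, List.getElem_range]
      congr 1
      omega
    have := (hnd.getElem_inj_iff).mp (e1.trans (he.trans e2.symm))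
    omega
  have hvinj : ∀ p q : ℕ, v p = v q → p % (2*n) = q % (2*n) := by
    intro p q he
    rw [hv, hv] at he
    have hp' : p % (2*n) < 2*n := Nat.mod_lt _ (by omega)
    have hq' : q % (2*n) < 2*n := Nat.mod_lt _ (by omega)
    rcases Nat.eq_zero_or_pos (p % (2*n)) with h0 | hpos
    · rcases Nat.eq_zero_or_pos (q % (2*n)) with h0' | hqpos
      · omega
      · rw [h0, getVert_zero] at he
        have hgN : C.getVert (2*n) = w := by rw [← hClen]; exact getVert_length C
        have := hgetinj _ _ le_rfl (by omega) (by omega) hqpos (hgN.trans he)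
        omega
    · rcases Nat.eq_zero_or_pos (q % (2*n)) with h0' | hqpos
      · rw [h0', getVert_zero] at he
        have hgN : C.getVert (2*n) = w := by rw [← hClen]; exact getVert_length C
        have := hgetinj _ _ (by omega) le_rfl hpos (by omega) (he.trans hgN.symm)
        omega
      · exact hgetinj _ _ (by omega) (by omega) hpos hqpos he
  -- membership description of the support
  have hxmem : ∀ u : V, u ∈ C.support ↔ ∃ j, j < 2*n ∧ C.getVert j = u := by
    intro u
    rw [hsupp]
    simp only [List.mem_map, List.mem_range]
    constructor
    · rintro ⟨j, hj, rfl⟩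
      by_cases hj' : j < 2*n
      · exact ⟨j, hj', rfl⟩
      · have hj2 : j = 2*n := by omega
        refine ⟨0, by omega, ?_⟩
        rw [hj2, ← hClen, getVert_length, getVert_zero]
    · rintro ⟨j, hj, rfl⟩
      exact ⟨j, by omega, rfl⟩
  -- the counting identity
  have hcount : ∀ (z : V) (r : ℕ), r < 2 → (∀ j : ℕ, G.Adj z (v j) → j % 2 = r) →
      {u : V | u ∈ C.support ∧ G.Adj z u}.ncard
        = ((Finset.range n).filter (fun k => G.Adj z (v (2*k + r)))).card := by
    intro z r hr hz
    have hset : {u : V | u ∈ C.support ∧ G.Adj z u}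
        = ↑(((Finset.range (2*n)).filter (fun j => G.Adj z (C.getVert j))).image C.getVert) := by
      ext u
      simp only [Set.mem_setOf_eq, Finset.coe_image, Set.mem_image, Finset.mem_coe,
        Finset.mem_filter, Finset.mem_range]
      constructor
      · rintro ⟨hu, ha⟩
        obtain ⟨j, hj, rfl⟩ := (hxmem u).mp hu
        exact ⟨j, ⟨hj, ha⟩, rfl⟩
      · rintro ⟨j, ⟨hj, ha⟩, rfl⟩
        exact ⟨(hxmem _).mpr ⟨j, hj, rfl⟩, ha⟩
    rw [hset, Set.ncard_coe_finset]
    rw [Finset.card_image_of_injOn (by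
      intro p hp q hq he
      simp only [Finset.coe_filter, Set.mem_setOf_eq, Finset.mem_range] at hp hq
      have hev : v p = v q := by
        rw [hv, hv, Nat.mod_eq_of_lt hp.1, Nat.mod_eq_of_lt hq.1]; exact he
      have := hvinj p q hev
      rwa [Nat.mod_eq_of_lt hp.1, Nat.mod_eq_of_lt hq.1] at this)]
    have himg : (Finset.range (2*n)).filter (fun j => G.Adj z (C.getVert j))
        = ((Finset.range n).filter (fun k => G.Adj z (v (2*k + r)))).image (fun k => 2*k + r) := by
      ext j
      simp only [Finset.mem_filter, Finset.mem_range, Finset.mem_image]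
      constructor
      · rintro ⟨hj, ha⟩
        have hadj : G.Adj z (v j) := by rw [hv, Nat.mod_eq_of_lt hj]; exact ha
        have hq := hz j hadj
        refine ⟨j / 2, ⟨by omega, ?_⟩, by show 2*(j/2) + r = j; omega⟩
        show G.Adj z (v (2*(j/2) + r))
        rw [show 2*(j/2) + r = j from by omega]
        exact hadj
      · rintro ⟨k, ⟨hk, ha⟩, rfl⟩
        have ha' : G.Adj z (v (2*k + r)) := ha
        show 2*k + r < 2*n ∧ G.Adj z (C.getVert (2*k + r))
        refine ⟨by omega, ?_⟩
        have hvv : v (2*k+r) = C.getVert (2*k+r) := by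
          rw [hv, Nat.mod_eq_of_lt (by omega)]
        rwa [hvv] at ha'
    rw [himg, Finset.card_image_of_injOn (by
      intro p _ q _ h
      have h' : 2*p + r = 2*q + r := h
      omega)]
  -- the two neighbour sets
  have cx := hcount x (1 - pe) (by omega) (by
    intro j hj
    rw [hv] at hj
    have := hx j hj
    omega)
  have cy := hcount y pe hpe (by
    intro j hj
    rw [hv] at hj
    exact hy j hj)
  set Ax := (Finset.range n).filter (fun k => G.Adj x (v (2*k + (1 - pe)))) with hAx
  set Ay := (Finset.range n).filter (fun k => G.Adj y (v (2*k + pe))) with hAy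
  have hcard : n < Ax.card + Ay.card := by
    rw [cx, cy] at hcnt
    exact hcnt
  -- pigeonhole
  set B := Ay.image (fun m => (m + (i - 1 + pe)) % n) with hB
  have hBcard : B.card = Ay.card := Finset.card_image_of_injOn (by
    intro a ha b hb h
    have ha' : a < n := Finset.mem_range.mp ((Finset.mem_filter.mp ha).1)
    have hb' : b < n := Finset.mem_range.mp ((Finset.mem_filter.mp hb).1)
    have h' := Nat.ModEq.add_right_cancel' (i - 1 + pe) (h : _ ≡ _ [MOD n])
    unfold Nat.ModEq at h'
    rwa [Nat.mod_eq_of_lt ha', Nat.mod_eq_of_lt hb'] at h')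
  have hsubU : Ax ∪ B ⊆ Finset.range n := by
    intro a ha
    rcases Finset.mem_union.mp ha with h | h
    · exact Finset.filter_subset _ _ h
    · obtain ⟨m, _, rfl⟩ := Finset.mem_image.mp h
      exact Finset.mem_range.mpr (Nat.mod_lt _ (by omega))
  have hpos : 0 < (Ax ∩ B).card := by
    have h1 := Finset.card_union_add_card_inter Ax B
    have h2 : (Ax ∪ B).card ≤ n := by
      have := Finset.card_le_card hsubU
      simpa using this
    omega
  obtain ⟨k, hk⟩ := Finset.card_pos.mp hpos
  rw [Finset.mem_inter] at hk
  obtain ⟨m, hmAy, hmk⟩ := Finset.mem_image.mp hk.2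
  have hkn : k < n := Finset.mem_range.mp ((Finset.mem_filter.mp hk.1).1)
  have hmn : m < n := Finset.mem_range.mp ((Finset.mem_filter.mp hmAy).1)
  have hadjx0 : G.Adj x (v (2*k + (1 - pe))) := (Finset.mem_filter.mp hk.1).2
  have hadjy : G.Adj y (v (2*m + pe)) := (Finset.mem_filter.mp hmAy).2
  -- identify the endpoint of the arc
  have hdm := Nat.div_add_mod (m + (i - 1 + pe)) n
  obtain ⟨q0, hq0⟩ : ∃ q0, m + (i - 1 + pe) = n * q0 + k := ⟨(m + (i - 1 + pe)) / n, by omega⟩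
  have hva : v (2*m + pe + (2*i - 1)) = v (2*k + (1 - pe)) := by
    rw [hv, hv]
    congr 1
    have hbridge : (2*n) * q0 = 2 * (n * q0) := by ring
    have hq : 2*m + pe + (2*i - 1) = (2*n) * q0 + (2*k + (1 - pe)) := by omega
    rw [hq, Nat.mul_add_mod]
  have hadjx : G.Adj x (v (2*m + pe + (2*i - 1))) := by
    rw [hva]; exact hadjx0
  -- the arc is internally disjoint
  have hnodup : ((List.range ((2*i - 1)+1)).map (fun t => v ((2*m + pe)+t))).Nodup := by
    apply List.Nodup.map_on ?_ List.nodup_range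
    intro t ht t' ht' he
    rw [List.mem_range] at ht ht'
    have h1 := hvinj _ _ he
    have h2 : (2*m + pe) + t ≡ (2*m + pe) + t' [MOD 2*n] := h1
    have h3 := Nat.ModEq.add_left_cancel' (2*m + pe) h2
    unfold Nat.ModEq at h3
    rw [Nat.mod_eq_of_lt (by omega), Nat.mod_eq_of_lt (by omega)] at h3
    exact h3
  have hMedge : ∀ t, t < 2*i - 1 →
      (s(v ((2*m + pe)+t), v ((2*m + pe)+t+1)) ∈ M ↔ t % 2 = 0) := by
    intro t ht
    rw [hv, hv]
    rw [halt (2*m + pe + t)]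
    omega
  exact buildCycle G M hMmatch x y P hP hPalt hPodd w C hdisj v hvadj hvsup
    (2*m + pe) (2*i - 1) i rfl hi1 hnodup hMedge hadjx hadjy

end Aux4

set_option maxHeartbeats 2000000 in
theorem stmt_6' {V : Type*} [Fintype V] [DecidableEq V]
    (G : SimpleGraph V) (X : Finset V)
    (hbip : ∀ u v : V, G.Adj u v → (u ∈ X ↔ v ∉ X))
    (M : Finset (Sym2 V)) (hMsub : ∀ e ∈ M, e ∈ G.edgeSet)
    (hMmatch : ∀ v : V, ∀ e ∈ M, ∀ f ∈ M, v ∈ e → v ∈ f → e = f)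
    (n : ℕ) (w : V) (C : G.Walk w w) (hC : C.IsCycle) (hClen : C.length = 2 * n)
    (hCM : 2 * (C.edges.toFinset ∩ M).card = C.length)
    (x y : V) (P : G.Walk x y) (hP : P.IsPath)
    (hPalt : ∀ i (h : i < P.edges.length), P.edges.get ⟨i, h⟩ ∈ M ↔ Even i)
    (hPodd : Odd P.edges.length)
    (hdisj : ∀ v ∈ P.support, v ∉ C.support)
    (hcnt : n < {v : V | v ∈ C.support ∧ G.Adj x v}.ncard
      + {v : V | v ∈ C.support ∧ G.Adj y v}.ncard) :
    ∀ i : ℕ, 1 ≤ i → i ≤ n →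
      ∃ (u : V) (D : G.Walk u u), D.IsCycle ∧
        (∀ z ∈ D.support, z ∈ P.support ∨ z ∈ C.support) ∧
        D.length = (P.length + 1) + 2 * i ∧
        2 * (D.edges.toFinset ∩ M).card = D.length := by
  classical
  intro i hi1 hin
  have hlen3 := hC.three_le_length
  have hn2 : 2 ≤ n := by omega
  -- index machinery on the cycle (same as in `aux`)
  let v : ℕ → V := fun j => C.getVert (j % (2*n))
  have hv : ∀ j, v j = C.getVert (j % (2*n)) := fun _ => rfl
  have hgN : C.getVert (2*n) = w := by rw [← hClen]; exact getVert_length C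
  have hvadj : ∀ j, G.Adj (v j) (v (j+1)) := by
    intro j
    have hj : j % (2*n) < 2*n := Nat.mod_lt _ (by omega)
    have hmm : (j % (2*n) + 1) % (2*n) = (j+1) % (2*n) := Nat.mod_add_mod j (2*n) 1
    by_cases hcase : j % (2*n) + 1 < 2*n
    · have h1 : (j+1) % (2*n) = j % (2*n) + 1 := by
        rw [← hmm, Nat.mod_eq_of_lt hcase]
      rw [hv, hv, h1]
      exact C.adj_getVert_succ (by omega)
    · have hje : j % (2*n) = 2*n - 1 := by omega
      have h2 : (j+1) % (2*n) = 0 := by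
        rw [← hmm, hje, show 2*n - 1 + 1 = 2*n from by omega, Nat.mod_self]
      rw [hv, hv, hje, h2, getVert_zero]
      have h3 := C.adj_getVert_succ (i := 2*n - 1) (by omega)
      rw [show 2*n - 1 + 1 = 2*n from by omega, hgN] at h3
      exact h3
  have hvsup : ∀ j, v j ∈ C.support := by
    intro j
    rw [hv]
    have := Nat.mod_lt j (show 0 < 2*n by omega)
    exact getVert_mem_support' C _ (by rw [hClen]; omega)
  have hsupp : C.support = (List.range (2*n+1)).map C.getVert := by
    rw [walk_support_eq, hClen]
  have htail : C.support.tail = (List.range (2*n)).map (fun t => C.getVert (t+1)) := by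
    rw [hsupp, List.range_succ_eq_map, List.map_cons, List.map_map, List.tail_cons]
    rfl
  have hgetinj : ∀ p q : ℕ, p ≤ 2*n → q ≤ 2*n → 0 < p → 0 < q →
      C.getVert p = C.getVert q → p = q := by
    intro p q hp hq hp0 hq0 he
    have hnd := hC.support_nodup
    rw [htail] at hnd
    have e1 : ((List.range (2*n)).map (fun t => C.getVert (t+1)))[p-1]'(by simp; omega) = C.getVert p := by
      simp only [List.getElem_map, List.getElem_range]
      congr 1
      omega
    have e2 : ((List.range (2*n)).map (fun t => C.getVert (t+1)))[q-1]'(by simp; omega) = C.getVert q := by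
      simp only [List.getElem_map, List.getElem_range]
      congr 1
      omega
    have := (hnd.getElem_inj_iff).mp (e1.trans (he.trans e2.symm))
    omega
  have hvinj : ∀ p q : ℕ, v p = v q → p % (2*n) = q % (2*n) := by
    intro p q he
    rw [hv, hv] at he
    have hp' : p % (2*n) < 2*n := Nat.mod_lt _ (by omega)
    have hq' : q % (2*n) < 2*n := Nat.mod_lt _ (by omega)
    rcases Nat.eq_zero_or_pos (p % (2*n)) with h0 | hpos
    · rcases Nat.eq_zero_or_pos (q % (2*n)) with h0' | hqpos
      · omega
      · rw [h0, getVert_zero] at he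
        have := hgetinj _ _ le_rfl (by omega) (by omega) hqpos (hgN.trans he)
        omega
    · rcases Nat.eq_zero_or_pos (q % (2*n)) with h0' | hqpos
      · rw [h0', getVert_zero] at he
        have := hgetinj _ _ (by omega) le_rfl hpos (by omega) (he.trans hgN.symm)
        omega
      · exact hgetinj _ _ (by omega) (by omega) hpos hqpos he
  -- the cyclic edge function
  let e : ℕ → Sym2 V := fun j => s(v j, v (j+1))
  have hedef : ∀ j, e j = s(v j, v (j+1)) := fun _ => rfl
  have hep : ∀ j, e (j % (2*n)) = e j := by
    intro j
    rw [hedef, hedef]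
    have h1 : v (j % (2*n)) = v j := by
      rw [hv, hv, Nat.mod_eq_of_lt (Nat.mod_lt _ (show 0 < 2*n by omega))]
    have h2 : v (j % (2*n) + 1) = v (j+1) := by
      rw [hv, hv, Nat.mod_add_mod]
    rw [h1, h2]
  have heinj : ∀ p q : ℕ, e p = e q → p % (2*n) = q % (2*n) := by
    intro p q he
    rw [hedef, hedef, Sym2.eq_iff] at he
    rcases he with ⟨h1, _⟩ | ⟨h1, h2⟩
    · exact hvinj _ _ h1
    · exfalso
      have c1 : p ≡ q + 1 [MOD 2*n] := hvinj _ _ h1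
      have c2 : p + 1 ≡ q [MOD 2*n] := hvinj _ _ h2
      have d1 : p + 1 ≡ q + 2 [MOD 2*n] := c1.add_right 1
      have d2 : q + 0 ≡ q + 2 [MOD 2*n] := by
        have := c2.symm.trans d1
        simpa using this
      have d3 : 0 ≡ 2 [MOD 2*n] := Nat.ModEq.add_left_cancel' q d2
      have d4 : (0:ℕ) % (2*n) = 2 % (2*n) := d3
      rw [Nat.zero_mod, Nat.mod_eq_of_lt (by omega)] at d4
      omega
  -- the edges of C as values of e
  have hCedges : C.edges = (List.range (2*n)).map (fun t => s(C.getVert t, C.getVert (t+1))) := by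
    rw [walk_edges_eq, hClen]
  have he' : ∀ j, j < 2*n → e j = s(C.getVert j, C.getVert (j+1)) := by
    intro j hj
    rw [hedef, hv, hv, Nat.mod_eq_of_lt hj]
    by_cases hj1 : j + 1 < 2*n
    · rw [Nat.mod_eq_of_lt hj1]
    · have hj2 : j + 1 = 2*n := by omega
      rw [hj2, Nat.mod_self, getVert_zero, hgN]
  -- number of matching edges of C
  have hMn : ((Finset.range (2*n)).filter (fun j => e j ∈ M)).card = n := by
    have hcap : (C.edges.toFinset ∩ M).card = n := by omega
    have himg : ((Finset.range (2*n)).filter (fun j => e j ∈ M)).image e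
        = C.edges.toFinset ∩ M := by
      ext f
      simp only [Finset.mem_image, Finset.mem_filter, Finset.mem_range, Finset.mem_inter,
        List.mem_toFinset]
      constructor
      · rintro ⟨j, ⟨hj, hjM⟩, rfl⟩
        refine ⟨?_, hjM⟩
        rw [hCedges, he' j hj]
        exact List.mem_map_of_mem (List.mem_range.mpr hj)
      · rintro ⟨hf, hfM⟩
        rw [hCedges] at hf
        obtain ⟨t, ht, rfl⟩ := List.mem_map.mp hf
        rw [List.mem_range] at ht
        exact ⟨t, ⟨ht, by rw [he' t ht]; exact hfM⟩, he' t ht⟩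
    have hinj : Set.InjOn e ((Finset.range (2*n)).filter (fun j => e j ∈ M)) := by
      intro p hp q hq hpq
      simp only [Finset.coe_filter, Set.mem_setOf_eq, Finset.mem_range] at hp hq
      have := heinj p q hpq
      rwa [Nat.mod_eq_of_lt hp.1, Nat.mod_eq_of_lt hq.1] at this
    rw [← Finset.card_image_of_injOn hinj, himg, hcap]
  -- support cardinality
  have hwtail : w ∈ C.support.tail := by
    rw [htail]
    refine List.mem_map.mpr ⟨2*n - 1, List.mem_range.mpr (by omega), ?_⟩
    rw [show 2*n - 1 + 1 = 2*n from by omega, hgN]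
  have hTcard : C.support.tail.toFinset.card = 2*n := by
    rw [List.toFinset_card_of_nodup hC.support_nodup]
    rw [htail]
    simp
  have hTsub : ∀ z ∈ C.support, z ∈ C.support.tail := by
    intro z hz
    rw [support_eq_cons] at hz
    rcases List.mem_cons.mp hz with h | h
    · rw [h]; exact hwtail
    · exact h
  -- every vertex of C is covered by a matching edge of C
  have hcover : ∀ t : ℕ, ∃ j, j < 2*n ∧ e j ∈ M ∧ v t ∈ e j := by
    have hdisjP : ∀ (j : ℕ), j ∈ (Finset.range (2*n)).filter (fun j => e j ∈ M) →
        ∀ (j' : ℕ), j' ∈ (Finset.range (2*n)).filter (fun j => e j ∈ M) → j ≠ j' →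
        Disjoint ({v j, v (j+1)} : Finset V) {v j', v (j'+1)} := by
      intro j hj j' hj' hne
      simp only [Finset.mem_filter, Finset.mem_range] at hj hj'
      rw [Finset.disjoint_left]
      intro z hz hz'
      have hz1 : z ∈ e j := by
        rw [hedef, Sym2.mem_iff]
        simpa using hz
      have hz2 : z ∈ e j' := by
        rw [hedef, Sym2.mem_iff]
        simpa using hz'
      have := hMmatch z _ hj.2 _ hj'.2 hz1 hz2
      have := heinj _ _ this
      rw [Nat.mod_eq_of_lt hj.1, Nat.mod_eq_of_lt hj'.1] at this
      exact hne this
    have hUcard : (((Finset.range (2*n)).filter (fun j => e j ∈ M)).biUnion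
        (fun j => {v j, v (j+1)})).card = 2*n := by
      rw [Finset.card_biUnion hdisjP]
      have : ∀ j ∈ (Finset.range (2*n)).filter (fun j => e j ∈ M),
          ({v j, v (j+1)} : Finset V).card = 2 := by
        intro j _
        rw [Finset.card_insert_of_notMem (by simp [(hvadj j).ne]), Finset.card_singleton]
      rw [Finset.sum_congr rfl this, Finset.sum_const, hMn, smul_eq_mul]
      omega
    have hUsub : (((Finset.range (2*n)).filter (fun j => e j ∈ M)).biUnion
        (fun j => {v j, v (j+1)})) ⊆ C.support.tail.toFinset := by
      intro z hz
      obtain ⟨j, _, hzj⟩ := Finset.mem_biUnion.mp hz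
      rw [List.mem_toFinset]
      rcases Finset.mem_insert.mp hzj with h | h
      · rw [h]; exact hTsub _ (hvsup j)
      · rw [Finset.mem_singleton.mp h]; exact hTsub _ (hvsup (j+1))
    have hUeq : (((Finset.range (2*n)).filter (fun j => e j ∈ M)).biUnion
        (fun j => {v j, v (j+1)})) = C.support.tail.toFinset :=
      Finset.eq_of_subset_of_card_le hUsub (by rw [hTcard, hUcard])
    intro t
    have hvt : v t ∈ C.support.tail.toFinset := List.mem_toFinset.mpr (hTsub _ (hvsup t))
    rw [← hUeq] at hvt
    obtain ⟨j, hj, hzj⟩ := Finset.mem_biUnion.mp hvt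
    simp only [Finset.mem_filter, Finset.mem_range] at hj
    refine ⟨j, hj.1, hj.2, ?_⟩
    rw [hedef, Sym2.mem_iff]
    simpa using hzj
  -- one of two consecutive edges is always in M
  have halt1 : ∀ t : ℕ, e t ∈ M ∨ e (t+1) ∈ M := by
    intro t
    obtain ⟨j, hj, hjM, hmem⟩ := hcover (t+1)
    rw [hedef, Sym2.mem_iff] at hmem
    rcases hmem with h | h
    · right
      have h5 := hvinj _ _ h
      have hjj : (t+1) % (2*n) = j := by rwa [Nat.mod_eq_of_lt hj] at h5
      rw [← hep (t+1), hjj]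
      exact hjM
    · left
      have h2 := hvinj _ _ h
      have h3 : t ≡ j [MOD 2*n] := Nat.ModEq.add_right_cancel' 1 h2
      have h4 : t % (2*n) = j := by
        have : t % (2*n) = j % (2*n) := h3
        rwa [Nat.mod_eq_of_lt hj] at this
      rw [← hep t, h4]
      exact hjM
  -- never two consecutive edges in M
  have hnotboth : ∀ t : ℕ, ¬ (e t ∈ M ∧ e (t+1) ∈ M) := by
    rintro t ⟨h1, h2⟩
    have hm1 : v (t+1) ∈ e t := by rw [hedef, Sym2.mem_iff]; right; rfl
    have hm2 : v (t+1) ∈ e (t+1) := by rw [hedef, Sym2.mem_iff]; left; rfl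
    have := hMmatch _ _ h1 _ h2 hm1 hm2
    have h3 := heinj _ _ this
    have h4 : t + 0 ≡ t + 1 [MOD 2*n] := by rw [Nat.add_zero]; exact h3
    have h5 : 0 ≡ 1 [MOD 2*n] := Nat.ModEq.add_left_cancel' t h4
    have h6 : (0:ℕ) % (2*n) = 1 % (2*n) := h5
    rw [Nat.zero_mod, Nat.mod_eq_of_lt (by omega)] at h6
    omega
  -- full alternation
  set pe : ℕ := if e 0 ∈ M then 0 else 1 with hpedef
  have hpe : pe < 2 := by
    rw [hpedef]; split <;> omega
  have halt2 : ∀ t : ℕ, (e t ∈ M ↔ t % 2 = pe) := by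
    intro t
    induction t with
    | zero =>
      by_cases h0 : e 0 ∈ M <;> simp [hpedef, h0]
    | succ t ih =>
      have h1 := halt1 t
      have h2 := hnotboth t
      have h3 : (e (t+1) ∈ M) ↔ ¬ (e t ∈ M) :=
        ⟨fun h he => h2 ⟨he, h⟩, fun h => h1.resolve_left h⟩
      rw [h3, ih]
      omega
  -- bipartite parities
  have hPodd' : P.length % 2 = 1 := by
    have h0 := length_edges P
    obtain ⟨t, ht⟩ := hPodd
    omega
  have hsideC : ∀ j : ℕ, (v j ∈ X ↔ (w ∈ X ↔ j % 2 = 0)) := by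
    intro j
    have h1 := walk_side hbip C (j % (2*n)) (by
      rw [hClen]
      have := Nat.mod_lt j (show 0 < 2*n by omega)
      omega)
    rw [hv, h1, Nat.mod_mod_of_dvd j ⟨n, rfl⟩]
  have hxpar : ∀ j : ℕ, G.Adj x (v j) → (j % 2 = 0 ↔ (w ∈ X ↔ x ∉ X)) := by
    intro j hadj
    have h1 := hbip x (v j) hadj
    have h2 := hsideC j
    tauto
  have hypar : ∀ j : ℕ, G.Adj y (v j) → (j % 2 = 0 ↔ (w ∈ X ↔ y ∉ X)) := by
    intro j hadj
    have h1 := hbip y (v j) hadj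
    have h2 := hsideC j
    tauto
  have hxyop : y ∈ X ↔ x ∉ X := by
    have h1 := walk_side hbip P P.length le_rfl
    rw [getVert_length] at h1
    have h2 : ¬ (P.length % 2 = 0) := by omega
    tauto
  by_cases hcase : ((w ∈ X ↔ y ∉ X) ↔ pe = 0)
  · have hy' : ∀ j : ℕ, G.Adj y (C.getVert (j % (2*n))) → j % 2 = pe := by
      intro j hadj
      have h1 := hypar j (by rw [hv]; exact hadj)
      have h2 : j % 2 = 0 ↔ pe = 0 := h1.trans hcase
      omega
    have hx' : ∀ j : ℕ, G.Adj x (C.getVert (j % (2*n))) → ¬ (j % 2 = pe) := by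
      intro j hadj
      have h1 := hxpar j (by rw [hv]; exact hadj)
      have h2 : j % 2 = 0 ↔ ¬ (pe = 0) := by tauto
      omega
    exact aux G M hMmatch n w C hC hClen pe hpe halt2 x y P hP hPalt hPodd hdisj
      hx' hy' hcnt i hi1 hin
  · have hx'' : ∀ j : ℕ, G.Adj y (C.getVert (j % (2*n))) → ¬ (j % 2 = pe) := by
      intro j hadj
      have h1 := hypar j (by rw [hv]; exact hadj)
      have h2 : j % 2 = 0 ↔ ¬ (pe = 0) := by tauto
      omega
    have hy'' : ∀ j : ℕ, G.Adj x (C.getVert (j % (2*n))) → j % 2 = pe := by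
      intro j hadj
      have h1 := hxpar j (by rw [hv]; exact hadj)
      have h2 : j % 2 = 0 ↔ pe = 0 := by tauto
      omega
    have hPrevalt : ∀ i' (h : i' < P.reverse.edges.length),
        P.reverse.edges.get ⟨i', h⟩ ∈ M ↔ Even i' := by
      intro i' h
      have hlenr : P.reverse.edges.length = P.edges.length := by
        rw [edges_reverse, List.length_reverse]
      have h' : i' < P.edges.length := by rwa [hlenr] at h
      have hget : P.reverse.edges.get ⟨i', h⟩ = P.edges[P.edges.length - 1 - i'] := by
        rw [List.get_eq_getElem]
        simp only [edges_reverse]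
        rw [List.getElem_reverse]
      rw [hget]
      have h2 : P.edges[P.edges.length - 1 - i'] ∈ M ↔ Even (P.edges.length - 1 - i') := by
        simpa using hPalt (P.edges.length - 1 - i') (by omega)
      rw [h2, Nat.even_iff, Nat.even_iff]
      have h0 := length_edges P
      omega
    have hPrevodd : Odd P.reverse.edges.length := by
      rw [edges_reverse, List.length_reverse]; exact hPodd
    have hdisjrev : ∀ z ∈ P.reverse.support, z ∉ C.support := by
      intro z hz
      rw [support_reverse, List.mem_reverse] at hz
      exact hdisj z hz
    have hcnt' : n < {v : V | v ∈ C.support ∧ G.Adj y v}.ncard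
        + {v : V | v ∈ C.support ∧ G.Adj x v}.ncard := by omega
    obtain ⟨u, D, h1, h2, h3, h4⟩ := aux G M hMmatch n w C hC hClen pe hpe halt2
      y x P.reverse hP.reverse hPrevalt hPrevodd hdisjrev hx'' hy'' hcnt' i hi1 hin
    refine ⟨u, D, h1, ?_, ?_, h4⟩
    · intro z hz
      rcases h2 z hz with hmem | hmem
      · left; rwa [support_reverse, List.mem_reverse] at hmem
      · right; exact hmem
    · rwa [length_reverse] at h3


/-- Lemma 1: let `G` be a bipartite graph with a matching `M`, `C` an `M`-cycle of
length `2n`, and `P = P[x,y]` an `M`-path in `G − V(C)`.  If the number of edges of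
`G` between `{x, y}` and `V(C)` exceeds `n`, then `G[V(P) ∪ V(C)]` contains an
`M`-cycle of length `|P| + 2i` for every `1 ≤ i ≤ n`.
An `M`-cycle is a cycle exactly half of whose edges lie in `M`; an `M`-path is an
alternating path starting and ending with edges of `M` (edges at even positions
belong to `M`, and the number of edges is odd). -/
theorem stmt_6 {V : Type*} [Fintype V] [DecidableEq V]
    (G : SimpleGraph V) (X : Finset V)
    (hbip : ∀ u v : V, G.Adj u v → (u ∈ X ↔ v ∉ X))
    (M : Finset (Sym2 V)) (hMsub : ∀ e ∈ M, e ∈ G.edgeSet)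
    (hMmatch : ∀ v : V, ∀ e ∈ M, ∀ f ∈ M, v ∈ e → v ∈ f → e = f)
    (n : ℕ) (w : V) (C : G.Walk w w) (hC : C.IsCycle) (hClen : C.length = 2 * n)
    (hCM : 2 * (C.edges.toFinset ∩ M).card = C.length)
    (x y : V) (P : G.Walk x y) (hP : P.IsPath)
    (hPalt : ∀ i (h : i < P.edges.length), P.edges.get ⟨i, h⟩ ∈ M ↔ Even i)
    (hPodd : Odd P.edges.length)
    (hdisj : ∀ v ∈ P.support, v ∉ C.support)
    (hcnt : n < {v : V | v ∈ C.support ∧ G.Adj x v}.ncard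
      + {v : V | v ∈ C.support ∧ G.Adj y v}.ncard) :
    ∀ i : ℕ, 1 ≤ i → i ≤ n →
      ∃ (u : V) (D : G.Walk u u), D.IsCycle ∧
        (∀ z ∈ D.support, z ∈ P.support ∨ z ∈ C.support) ∧
        D.length = (P.length + 1) + 2 * i ∧
        2 * (D.edges.toFinset ∩ M).card = D.length := by
  exact stmt_6' G X hbip M hMsub hMmatch n w C hC hClen hCM x y P hP hPalt hPodd hdisj hcnt
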